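/- Let n ≥ 1 and let x > 1 have stopping time σ(x) = σ_n. If exactly n+1 indices s with 0 ≤ s ≤ κ(n) satisfy that T^s(x) is odd, then T^s(x) is even for every s with κ(n) < s < σ_n. -/

import Mathlib

/-- The 3x+1 map: `T x = x/2` if `x` is even, `(3x+1)/2` if `x` is odd. -/
def T (x : ℕ) : ℕ := if x % 2 = 0 then x / 2 else (3 * x + 1) / 2

/-- The stopping time of `x`: the least `s ≥ 1` with `T^[s] x < x`. -/
noncomputable def stoppingTime (x : ℕ) : ℕ := sInf {s : ℕ | 1 ≤ s ∧ T^[s] x < x}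

/-- `σ_n = ⌊1 + (n+1)·log₂ 3⌋`. -/
noncomputable def sigmaN (n : ℕ) : ℕ := ⌊1 + ((n : ℝ) + 1) * Real.logb 2 3⌋₊

/-- `κ(n) = ⌊n·log₂ 3⌋`. -/
noncomputable def kappa (n : ℕ) : ℕ := ⌊(n : ℝ) * Real.logb 2 3⌋₊

lemma key_ineq (x : ℕ) (s : ℕ) :
    3 ^ (((Finset.range s).filter (fun t => T^[t] x % 2 = 1)).card) * x
      ≤ 2 ^ s * T^[s] x := by
  induction s with
  | zero => simp
  | succ s ih =>
    rw [Finset.range_add_one, Finset.filter_insert, Function.iterate_succ_apply']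
    set y := T^[s] x with hy
    by_cases h : y % 2 = 1
    · rw [if_pos h, Finset.card_insert_of_notMem (by simp)]
      have hT : 2 * T y = 3 * y + 1 := by
        simp only [T]
        rw [if_neg (by omega)]
        omega
      calc 3 ^ ((Finset.filter (fun t => T^[t] x % 2 = 1) (Finset.range s)).card + 1) * x
          = 3 * (3 ^ ((Finset.filter (fun t => T^[t] x % 2 = 1) (Finset.range s)).card) * x) := by
            ring
        _ ≤ 3 * (2 ^ s * y) := Nat.mul_le_mul_left 3 ih
        _ ≤ 2 ^ s * (3 * y + 1) := by
            have : 3 * (2 ^ s * y) = 2 ^ s * (3 * y) := by ring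
            rw [this]
            exact Nat.mul_le_mul_left _ (by omega)
        _ = 2 ^ (s + 1) * T y := by rw [pow_succ, mul_assoc, hT]
    · rw [if_neg h]
      have hT : 2 * T y = y := by
        simp only [T]
        rw [if_pos (by omega)]
        omega
      calc 3 ^ ((Finset.filter (fun t => T^[t] x % 2 = 1) (Finset.range s)).card) * x
          ≤ 2 ^ s * y := ih
        _ = 2 ^ (s + 1) * T y := by rw [pow_succ, mul_assoc, hT]

theorem stmt9 (n x : ℕ) (hn : 1 ≤ n) (hx : 1 < x) (hstop : stoppingTime x = sigmaN n)
    (hcard : ((Finset.range (kappa n + 1)).filter (fun s => T^[s] x % 2 = 1)).card = n + 1) :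
    ∀ s : ℕ, kappa n < s → s < sigmaN n → T^[s] x % 2 = 0 := by
  intro s hks hss
  by_contra hodd
  have hodd1 : T^[s] x % 2 = 1 := by omega
  set L := Real.logb 2 3 with hLdef
  have hL1 : (1 : ℝ) ≤ L := by
    rw [hLdef, show (1:ℝ) = Real.logb 2 2 by simp]
    exact Real.logb_le_logb_of_le (by norm_num) (by norm_num) (by norm_num)
  have hLnn : (0 : ℝ) ≤ L := by linarith
  have hnL : (0 : ℝ) ≤ (n : ℝ) * L := mul_nonneg (Nat.cast_nonneg n) hLnn
  -- κ n + 1 ≤ σ n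
  have hks2 : kappa n + 1 ≤ sigmaN n := by
    apply Nat.le_floor
    push_cast
    have h1 : (kappa n : ℝ) ≤ (n : ℝ) * L := Nat.floor_le hnL
    nlinarith [Nat.cast_nonneg (α := ℝ) n]
  -- σ n is indeed a stopping index
  have hdrop : T^[sigmaN n] x < x := by
    have hne : {s : ℕ | 1 ≤ s ∧ T^[s] x < x}.Nonempty := by
      by_contra h
      rw [Set.not_nonempty_iff_eq_empty] at h
      rw [stoppingTime, h, Nat.sInf_empty] at hstop
      omega
    have := Nat.sInf_mem hne
    rw [← stoppingTime, hstop] at this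
    exact this.2
  -- at least n+2 odd indices below σ n
  have hsub : insert s ((Finset.range (kappa n + 1)).filter (fun t => T^[t] x % 2 = 1))
      ⊆ (Finset.range (sigmaN n)).filter (fun t => T^[t] x % 2 = 1) := by
    intro t ht
    simp only [Finset.mem_insert, Finset.mem_filter, Finset.mem_range] at *
    rcases ht with rfl | ⟨h1, h2⟩
    · exact ⟨hss, hodd1⟩
    · exact ⟨by omega, h2⟩
  have hnotmem : s ∉ (Finset.range (kappa n + 1)).filter (fun t => T^[t] x % 2 = 1) := by
    simp only [Finset.mem_filter, Finset.mem_range]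
    intro h
    omega
  have hcard2 : n + 2 ≤ ((Finset.range (sigmaN n)).filter (fun t => T^[t] x % 2 = 1)).card := by
    have h := Finset.card_le_card hsub
    rw [Finset.card_insert_of_notMem hnotmem, hcard] at h
    omega
  -- lower bound: 3^(n+2) < 2^(σ n)
  have h3 : 3 ^ (n + 2) * x < 2 ^ (sigmaN n) * x := by
    calc 3 ^ (n + 2) * x
        ≤ 3 ^ ((Finset.range (sigmaN n)).filter (fun t => T^[t] x % 2 = 1)).card * x :=
          Nat.mul_le_mul_right x (Nat.pow_le_pow_right (by norm_num) hcard2)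
      _ ≤ 2 ^ (sigmaN n) * T^[sigmaN n] x := key_ineq x (sigmaN n)
      _ < 2 ^ (sigmaN n) * x := by
          have h2 : 0 < 2 ^ (sigmaN n) := Nat.pow_pos (by norm_num)
          exact Nat.mul_lt_mul_of_le_of_lt (le_refl _) hdrop h2
  have h3' : 3 ^ (n + 2) < 2 ^ (sigmaN n) := Nat.lt_of_mul_lt_mul_right h3
  -- upper bound: 2^(σ n) ≤ 2·3^(n+1)
  have hup : (2 : ℝ) ^ (sigmaN n : ℝ) ≤ 2 * 3 ^ ((n : ℝ) + 1) := by
    have h1 : (sigmaN n : ℝ) ≤ 1 + ((n : ℝ) + 1) * L := Nat.floor_le (by nlinarith)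
    calc (2 : ℝ) ^ (sigmaN n : ℝ)
        ≤ 2 ^ (1 + ((n : ℝ) + 1) * L) := Real.rpow_le_rpow_of_exponent_le (by norm_num) h1
      _ = 2 * 3 ^ ((n : ℝ) + 1) := by
          rw [Real.rpow_add (by norm_num), Real.rpow_one, mul_comm ((n:ℝ)+1) L,
            Real.rpow_mul (by norm_num), hLdef,
            Real.rpow_logb (by norm_num) (by norm_num) (by norm_num)]
  -- contradiction
  have hcast : (3 : ℝ) ^ ((n : ℕ) + 2) < (2 : ℝ) ^ (sigmaN n : ℝ) := by
    rw [Real.rpow_natCast]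
    exact_mod_cast h3'
  have h31 : (3 : ℝ) ^ ((n : ℝ) + 1) = (3 : ℝ) ^ (n + 1 : ℕ) := by
    push_cast
    rw [← Real.rpow_natCast 3 (n + 1)]
    push_cast
    ring_nf
  have hpos : (0 : ℝ) < (3 : ℝ) ^ (n + 1 : ℕ) := by positivity
  rw [h31] at hup
  have : (3 : ℝ) ^ (n + 2) = 3 * 3 ^ (n + 1 : ℕ) := by ring
  nlinarith [hcast, hup]
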